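/- Let G be a graph and let M be a homogeneous set of G, and let k = cc(G[M]). Let G_M be the graph obtained from G by deleting M and adding a stable set S_M of k new vertices, each adjacent exactly to those vertices of V(G)∖M that are complete to M in G. Then cc(G_M) = cc(G). -/

import Mathlib

open SimpleGraph

/-- The bull graph: vertices a,b,c,d,e = 0,1,2,3,4; edges ab,bc,cd,be,ce. -/
def bull : SimpleGraph (Fin 5) :=
  SimpleGraph.fromEdgeSet {s(0,1), s(1,2), s(2,3), s(1,4), s(2,4)}

/-- The house graph: complement of the path on five vertices. -/
def house : SimpleGraph (Fin 5) := (SimpleGraph.pathGraph 5)ᶜ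

/-- `G` contains no induced subgraph isomorphic to `F`. -/
def FreeOf {V W : Type*} (G : SimpleGraph V) (F : SimpleGraph W) : Prop :=
  ¬ ∃ f : W ↪ V, ∀ a b : W, G.Adj (f a) (f b) ↔ F.Adj a b

/-- A homogeneous set: every outside vertex is complete or anticomplete to it. -/
def IsHomogSet {V : Type*} (G : SimpleGraph V) (S : Set V) : Prop :=
  ∀ v ∉ S, (∀ s ∈ S, G.Adj v s) ∨ (∀ s ∈ S, ¬ G.Adj v s)

/-- A proper homogeneous set: at least two vertices and not all of `V`. -/
def IsProperHomogSet {V : Type*} (G : SimpleGraph V) (S : Set V) : Prop :=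
  IsHomogSet G S ∧ S.Nontrivial ∧ S ≠ Set.univ

/-- A stable (independent) set. -/
def IsStableSet {V : Type*} (G : SimpleGraph V) (S : Set V) : Prop :=
  S.Pairwise fun u v => ¬ G.Adj u v

/-- A module: a nonempty homogeneous set that overlaps no homogeneous set. -/
def IsModuleSet {V : Type*} (G : SimpleGraph V) (M : Set V) : Prop :=
  M.Nonempty ∧ IsHomogSet G M ∧
    ∀ S : Set V, IsHomogSet G S → S ⊆ M ∨ M ⊆ S ∨ S ∩ M = ∅

/-- A quasi-maximal module: a module, different from `V`, such that the only
module strictly containing it is `V`. -/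
def IsQuasiMaxModule {V : Type*} (G : SimpleGraph V) (M : Set V) : Prop :=
  IsModuleSet G M ∧ M ≠ Set.univ ∧
    ∀ S : Set V, IsModuleSet G S → M ⊂ S → S = Set.univ

/-- A clique cover: a partition of the vertex set into cliques. -/
def IsCliqueCover {V : Type*} (G : SimpleGraph V) (C : Set (Set V)) : Prop :=
  Setoid.IsPartition C ∧ ∀ Q ∈ C, G.IsClique Q

/-- `cc G`: the minimum number of cliques in a clique cover of `G`. -/
noncomputable def cliqueCoverNumber {V : Type*} (G : SimpleGraph V) : ℕ :=
  sInf {n | ∃ C : Set (Set V), IsCliqueCover G C ∧ C.ncard = n}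

/-- `S` is complete to `T`: every vertex of `S` is adjacent to every vertex of `T`. -/
def CompleteTo {V : Type*} (G : SimpleGraph V) (S T : Set V) : Prop :=
  ∀ s ∈ S, ∀ t ∈ T, G.Adj s t

/-- `S` is anticomplete to `T`: no vertex of `S` is adjacent to a vertex of `T`. -/
def AnticompleteTo {V : Type*} (G : SimpleGraph V) (S T : Set V) : Prop :=
  ∀ s ∈ S, ∀ t ∈ T, ¬ G.Adj s t

/-- The 5-tuple setup from the paper: five nonempty pairwise disjoint sets
`A 0, …, A 4` (corresponding to `A_1, …, A_5`, indices modulo 5) with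
`A i` complete to `A (i+1)` for `i ∈ {0,1,2,3}`, `A i` anticomplete to
`A (i+2)` for all `i`, and `A 4` complete or anticomplete to `A 0`. -/
def GoodTuple {V : Type*} (G : SimpleGraph V) (A : Fin 5 → Set V) : Prop :=
  (∀ i, (A i).Nonempty) ∧
  (Pairwise fun i j => Disjoint (A i) (A j)) ∧
  (∀ i : Fin 5, i ≠ 4 → CompleteTo G (A i) (A (i + 1))) ∧
  (∀ i : Fin 5, AnticompleteTo G (A i) (A (i + 2))) ∧
  (CompleteTo G (A 4) (A 0) ∨ AnticompleteTo G (A 4) (A 0))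

/-- A good tuple whose union `A` is inclusionwise maximal among all good tuples. -/
def MaximalGoodTuple {V : Type*} (G : SimpleGraph V) (A : Fin 5 → Set V) : Prop :=
  GoodTuple G A ∧ ∀ A' : Fin 5 → Set V, GoodTuple G A' → ¬ (⋃ i, A i) ⊂ (⋃ i, A' i)

/-- The set `B` of vertices outside `A` that are complete to `A`. -/
def Bset {V : Type*} (G : SimpleGraph V) (A : Fin 5 → Set V) : Set V :=
  {v | v ∉ (⋃ i, A i) ∧ ∀ a ∈ ⋃ i, A i, G.Adj v a}

/-- The graph obtained from `G` by deleting `M` and adding a stable set of `k`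
new vertices, each adjacent exactly to those vertices of `V ∖ M` that are
complete to `M` in `G`. -/
def replaceByStable {V : Type*} (G : SimpleGraph V) (M : Set V) (k : ℕ) :
    SimpleGraph ((↥(Mᶜ : Set V)) ⊕ Fin k) where
  Adj x y :=
    match x, y with
    | Sum.inl a, Sum.inl b => G.Adj a b
    | Sum.inl a, Sum.inr _ => ∀ m ∈ M, G.Adj a m
    | Sum.inr _, Sum.inl b => ∀ m ∈ M, G.Adj b m
    | Sum.inr _, Sum.inr _ => False
  symm := by
    constructor
    rintro (a | i) (b | j) h
    · exact G.adj_symm h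
    · exact h
    · exact h
    · exact h.elim
  loopless := by
    constructor
    rintro (a | i) h
    · exact G.irrefl h
    · exact h

private lemma exists_cliqueCover {V : Type*} (G : SimpleGraph V) :
    ∃ C : Set (Set V), IsCliqueCover G C := by
  refine ⟨Set.range fun v => ({v} : Set V), ⟨?_, ?_⟩, ?_⟩
  · rintro ⟨v, hv⟩
    exact (Set.singleton_nonempty v).ne_empty hv
  · intro a
    refine ⟨{a}, ⟨⟨a, rfl⟩, rfl⟩, ?_⟩
    rintro y ⟨⟨c, rfl⟩, hy⟩
    simp_all
  · rintro Q ⟨v, rfl⟩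
    simp [SimpleGraph.IsClique]

private lemma cc_le_ncard {V : Type*} {G : SimpleGraph V} {C : Set (Set V)}
    (h : IsCliqueCover G C) : cliqueCoverNumber G ≤ C.ncard :=
  Nat.sInf_le ⟨C, h, rfl⟩

private lemma exists_opt_cover {V : Type*} (G : SimpleGraph V) :
    ∃ C : Set (Set V), IsCliqueCover G C ∧ C.ncard = cliqueCoverNumber G := by
  obtain ⟨C₀, hC₀⟩ := exists_cliqueCover G
  have hne : {n | ∃ C : Set (Set V), IsCliqueCover G C ∧ C.ncard = n}.Nonempty :=
    ⟨C₀.ncard, C₀, hC₀, rfl⟩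
  exact Nat.sInf_mem hne

/-- Let `M` be a homogeneous set of a graph `G`, let
`k = cc(G[M])`, and let `G_M` be the graph obtained by deleting `M` and adding
a stable set of `k` new vertices adjacent exactly to the vertices of `V ∖ M`
complete to `M`. Then `cc(G_M) = cc(G)`. -/
theorem stmt19 {V : Type*} [Fintype V] (G : SimpleGraph V) (M : Set V)
    (hM : IsHomogSet G M) :
    cliqueCoverNumber (replaceByStable G M (cliqueCoverNumber (G.induce M))) =
      cliqueCoverNumber G := by
  classical
  set k := cliqueCoverNumber (G.induce M) with hkdef
  set H := replaceByStable G M k with hHdef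
  apply le_antisymm
  · -- cc H ≤ cc G
    obtain ⟨C, ⟨⟨hCne, hCuniq⟩, hCclique⟩, hCn⟩ := exists_opt_cover G
    set T : Set (Set V) := {Q | Q ∈ C ∧ (Q ∩ M).Nonempty} with hTdef
    have hTsubC : T ⊆ C := fun Q hQ => hQ.1
    have hcover : IsCliqueCover (G.induce M)
        ((fun Q => {m : ↥M | (m : V) ∈ Q}) '' T) := by
      refine ⟨⟨?_, ?_⟩, ?_⟩
      · rintro ⟨Q, hQ, hQe⟩
        obtain ⟨v, hvQ, hvM⟩ := hQ.2
        have hmem : (⟨v, hvM⟩ : ↥M) ∈ {m : ↥M | (m : V) ∈ Q} := hvQ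
        have hQe' : {m : ↥M | (m : V) ∈ Q} = ∅ := hQe
        rw [hQe'] at hmem
        exact hmem
      · intro m
        obtain ⟨Q, ⟨hQC, hmQ⟩, huniq⟩ := hCuniq (m : V)
        refine ⟨{m' : ↥M | (m' : V) ∈ Q}, ⟨⟨Q, ⟨hQC, ⟨m, hmQ, m.2⟩⟩, rfl⟩, hmQ⟩, ?_⟩
        rintro y ⟨⟨Q', hQ', rfl⟩, hmy⟩
        rw [huniq Q' ⟨hQ'.1, hmy⟩]
      · rintro S ⟨Q, hQ, rfl⟩ m₁ h₁ m₂ h₂ hne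
        exact hCclique Q hQ.1 h₁ h₂ fun h => hne (Subtype.ext h)
    have hkT : k ≤ T.ncard :=
      le_trans (cc_le_ncard hcover) (Set.ncard_image_le (Set.toFinite T))
    obtain ⟨T', hT'T, hT'card⟩ := Set.exists_subset_card_eq hkT
    let g : Fin k ≃ ↥T' :=
      (Finite.equivFinOfCardEq (by rw [Nat.card_coe_set_eq, hT'card])).symm
    set Ψ : Set V → Set (↥(Mᶜ : Set V) ⊕ Fin k) := fun Q =>
      {x | Sum.elim (fun a : ↥(Mᶜ : Set V) => (a : V) ∈ Q)
        (fun i : Fin k => (↑(g i) : Set V) = Q) x} with hΨdef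
    have key : IsCliqueCover H ((Ψ '' C) \ {∅}) := by
      refine ⟨⟨?_, ?_⟩, ?_⟩
      · rintro ⟨-, h⟩; exact h rfl
      · rintro (a | i)
        · obtain ⟨Q, ⟨hQC, haQ⟩, huniq⟩ := hCuniq (a : V)
          have hmem : Sum.inl a ∈ Ψ Q := haQ
          refine ⟨Ψ Q, ⟨⟨⟨Q, hQC, rfl⟩, fun h => ?_⟩, hmem⟩, ?_⟩
          · rw [Set.mem_singleton_iff] at h; rw [h] at hmem; exact hmem
          · rintro y ⟨⟨⟨Q', hQ', rfl⟩, -⟩, hay⟩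
            rw [huniq Q' ⟨hQ', hay⟩]
        · have hgi : (↑(g i) : Set V) ∈ C := hTsubC (hT'T (g i).2)
          have hmem : Sum.inr i ∈ Ψ ↑(g i) := rfl
          refine ⟨Ψ ↑(g i), ⟨⟨⟨↑(g i), hgi, rfl⟩, fun h => ?_⟩, hmem⟩, ?_⟩
          · rw [Set.mem_singleton_iff] at h; rw [h] at hmem; exact hmem
          · rintro y ⟨⟨⟨Q', hQ', rfl⟩, -⟩, hiy⟩
            have : (↑(g i) : Set V) = Q' := hiy
            rw [← this]
      · rintro S ⟨⟨Q, hQC, rfl⟩, -⟩ (a | i) hx (b | j) hy hxy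
        · exact hCclique Q hQC hx hy
            fun h => hxy (congrArg Sum.inl (Subtype.ext h))
        · -- inl a, inr j : need ∀ m ∈ M, G.Adj ↑a m
          have hQT' : Q ∈ T' := (hy : (↑(g j) : Set V) = Q) ▸ (g j).2
          obtain ⟨v0, hv0Q, hv0M⟩ := (hT'T hQT').2
          intro m hm
          rcases hM (a : V) a.2 with hcomp | hanti
          · exact hcomp m hm
          · exfalso
            have hne : (a : V) ≠ v0 := fun h => a.2 (h ▸ hv0M)
            exact hanti v0 hv0M (hCclique Q hQC hx hv0Q hne)
        · -- inr i, inl b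
          have hQT' : Q ∈ T' := (hx : (↑(g i) : Set V) = Q) ▸ (g i).2
          obtain ⟨v0, hv0Q, hv0M⟩ := (hT'T hQT').2
          intro m hm
          rcases hM (b : V) b.2 with hcomp | hanti
          · exact hcomp m hm
          · exfalso
            have hne : (b : V) ≠ v0 := fun h => b.2 (h ▸ hv0M)
            exact hanti v0 hv0M (hCclique Q hQC hy hv0Q hne)
        · -- inr i, inr j
          exfalso
          have hij : g i = g j := Subtype.ext ((hx : _ = Q).trans (hy : _ = Q).symm)
          exact hxy (congrArg Sum.inr (g.injective hij))
    calc cliqueCoverNumber H ≤ ((Ψ '' C) \ {∅}).ncard := cc_le_ncard key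
      _ ≤ (Ψ '' C).ncard := Set.ncard_le_ncard Set.diff_subset (Set.toFinite _)
      _ ≤ C.ncard := Set.ncard_image_le (Set.toFinite C)
      _ = cliqueCoverNumber G := hCn
  · -- cc G ≤ cc H
    obtain ⟨C, ⟨⟨hCne, hCuniq⟩, hCclique⟩, hCn⟩ := exists_opt_cover H
    obtain ⟨D, ⟨⟨hDne, hDuniq⟩, hDclique⟩, hDn⟩ := exists_opt_cover (G.induce M)
    let e : Fin k ≃ ↥D :=
      (Finite.equivFinOfCardEq (by rw [Nat.card_coe_set_eq, hDn])).symm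
    set Φ : Set (↥(Mᶜ : Set V) ⊕ Fin k) → Set V := fun Q =>
      {v | ∃ h : v ∈ (Mᶜ : Set V), Sum.inl ⟨v, h⟩ ∈ Q} ∪
      {v | ∃ (h : v ∈ M) (i : Fin k), Sum.inr i ∈ Q ∧ (⟨v, h⟩ : ↥M) ∈ (↑(e i) : Set ↥M)}
      with hΦdef
    have key : IsCliqueCover G (Φ '' C) := by
      refine ⟨⟨?_, ?_⟩, ?_⟩
      · rintro ⟨Q, hQC, hQe⟩
        have hQne : Q ≠ ∅ := fun h => hCne (h ▸ hQC)
        obtain ⟨x, hx⟩ := Set.nonempty_iff_ne_empty.2 hQne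
        rcases x with a | i
        · have : (a : V) ∈ Φ Q := Or.inl ⟨a.2, hx⟩
          rw [hQe] at this; exact this
        · have hDi : (↑(e i) : Set ↥M) ≠ ∅ := fun h => hDne (h ▸ (e i).2)
          obtain ⟨m, hm⟩ := Set.nonempty_iff_ne_empty.2 hDi
          have : (m : V) ∈ Φ Q := Or.inr ⟨m.2, i, hx, hm⟩
          rw [hQe] at this; exact this
      · intro v
        by_cases hv : v ∈ M
        · obtain ⟨B, ⟨hBD, hmB⟩, hBuniq⟩ := hDuniq (⟨v, hv⟩ : ↥M)
          set i := e.symm ⟨B, hBD⟩ with hidef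
          have hei : (↑(e i) : Set ↥M) = B := by rw [hidef, e.apply_symm_apply]
          obtain ⟨Q, ⟨hQC, hiQ⟩, hQuniq⟩ := hCuniq (Sum.inr i)
          refine ⟨Φ Q, ⟨⟨Q, hQC, rfl⟩, Or.inr ⟨hv, i, hiQ, hei ▸ hmB⟩⟩, ?_⟩
          rintro y ⟨⟨Q', hQ', rfl⟩, (⟨h', -⟩ | ⟨h', i', hi'Q', hmi'⟩)⟩
          · exact absurd hv h'
          · have hB' : (↑(e i') : Set ↥M) = B := hBuniq _ ⟨(e i').2, hmi'⟩
            have : i' = i := by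
              have : e i' = e i := Subtype.ext (hB'.trans hei.symm)
              exact e.injective this
            rw [hQuniq Q' ⟨hQ', this ▸ hi'Q'⟩]
        · obtain ⟨Q, ⟨hQC, haQ⟩, hQuniq⟩ := hCuniq (Sum.inl ⟨v, hv⟩)
          refine ⟨Φ Q, ⟨⟨Q, hQC, rfl⟩, Or.inl ⟨hv, haQ⟩⟩, ?_⟩
          rintro y ⟨⟨Q', hQ', rfl⟩, (⟨h', hmem'⟩ | ⟨h', -⟩)⟩
          · rw [hQuniq Q' ⟨hQ', hmem'⟩]
          · exact absurd h' hv
      · rintro S ⟨Q, hQC, rfl⟩ u hu v hv huv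
        rcases hu with ⟨hu', huQ⟩ | ⟨hu', i, hiQ, hui⟩ <;>
          rcases hv with ⟨hv', hvQ⟩ | ⟨hv', j, hjQ, hvj⟩
        · exact hCclique Q hQC huQ hvQ
            fun h => huv (congrArg Subtype.val (Sum.inl.inj h))
        · exact hCclique Q hQC huQ hjQ (by simp) v hv'
        · exact (hCclique Q hQC hvQ hiQ (by simp) u hu').symm
        · by_cases hij : i = j
          · subst hij
            exact hDclique (↑(e i)) (e i).2 hui hvj
              fun h => huv (congrArg Subtype.val h)
          · exact absurd (hCclique Q hQC hiQ hjQ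
              fun h => hij (Sum.inr.inj h)) id
    calc cliqueCoverNumber G ≤ (Φ '' C).ncard := cc_le_ncard key
      _ ≤ C.ncard := Set.ncard_image_le (Set.toFinite C)
      _ = cliqueCoverNumber H := hCn
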